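/- Let 0 < s < 1. For λ ∈ (0,1), ε = 1-λ sufficiently small, and total mass m ≥ C ε^{1+s} with C = 48/((1-s)s), any measure ρ of mass m on K_{λ,1} = [-1,-λ]∪[λ,1] symmetric under x↦-x with support mass m/2 on [λ,1] satisfies: for x ∈ (λ,1) at distance ≥ 0 from supp ρ ∩ [λ,1] lying left of all support in [λ,1], the derivative of V[ρ](x) = (W*ρ)(x) - 3x²/(1-s) satisfies V[ρ]'(x) ≥ (m/2)s(ε^{-s-1} - 1) - 6/(1-s) > 0. -/

import Mathlib

open MeasureTheory

lemma stmt16_aux (s t z : ℝ) (hzt : z ≠ t) :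
    HasDerivAt (fun w => |w - t| ^ (-s : ℝ))
      (if z < t then s * (t - z) ^ (-s - 1 : ℝ) else -(s * (z - t) ^ (-s - 1 : ℝ))) z := by
  rcases hzt.lt_or_gt with h | h
  · rw [if_pos h]
    have h1 : HasDerivAt (fun w : ℝ => t - w) (-1) z := by
      simpa using ((hasDerivAt_id z).const_sub t)
    have h2 := h1.rpow_const (p := -s) (Or.inl (by
      show t - z ≠ 0
      exact ne_of_gt (by linarith)))
    have h3 : (fun w : ℝ => |w - t| ^ (-s : ℝ)) =ᶠ[nhds z] fun w => (t - w) ^ (-s : ℝ) := by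
      filter_upwards [eventually_lt_nhds h] with w hw
      rw [abs_of_neg (by linarith : w - t < 0), neg_sub]
    have h4 := h2.congr_of_eventuallyEq h3
    exact h4.congr_deriv (by ring)
  · rw [if_neg (not_lt.2 h.le)]
    have h1 : HasDerivAt (fun w : ℝ => w - t) 1 z := by
      simpa using ((hasDerivAt_id z).sub_const t)
    have h2 := h1.rpow_const (p := -s) (Or.inl (by
      show z - t ≠ 0
      exact ne_of_gt (by linarith)))
    have h3 : (fun w : ℝ => |w - t| ^ (-s : ℝ)) =ᶠ[nhds z] fun w => (w - t) ^ (-s : ℝ) := by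
      filter_upwards [eventually_gt_nhds h] with w hw
      rw [abs_of_pos (by linarith : (0:ℝ) < w - t)]
    have h4 := h2.congr_of_eventuallyEq h3
    exact h4.congr_deriv (by ring)

set_option maxHeartbeats 1000000 in
theorem stmt16 (s lam m x x' : ℝ) (hs0 : 0 < s) (hs1 : s < 1)
    (hlam : lam ∈ Set.Ioo (0:ℝ) 1) (hεsmall : 1 - lam ≤ 1 / 2)
    (hm : 48 / ((1 - s) * s) * (1 - lam) ^ (1 + s) ≤ m)
    (ρ : Measure ℝ) [IsFiniteMeasure ρ]
    (hsupp : ρ (Set.Icc (-1:ℝ) (-lam) ∪ Set.Icc lam 1)ᶜ = 0)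
    (hsym : ρ.map (fun t => -t) = ρ)
    (hmass : ρ Set.univ = ENNReal.ofReal m)
    (hhalf : ρ (Set.Icc lam 1) = ENNReal.ofReal (m / 2))
    (hx : lam < x) (hxx' : x < x') (hx'1 : x' ≤ 1)
    (hgap : ρ (Set.Ico lam x') = 0) :
    m / 2 * s * ((1 - lam) ^ (-s - 1) - 1) - 6 / (1 - s)
      ≤ deriv (fun z : ℝ => (∫ t, |z - t| ^ (-s) ∂ρ) - 3 * z ^ 2 / (1 - s)) x ∧
    0 < m / 2 * s * ((1 - lam) ^ (-s - 1) - 1) - 6 / (1 - s) := by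
  obtain ⟨hlam0, hlam1⟩ := hlam
  have hc : 0 < 1 - s := by linarith
  have hε0 : 0 < 1 - lam := by linarith
  have hB0 : 0 < (1 - lam) ^ (1 + s : ℝ) := Real.rpow_pos_of_pos hε0 _
  have hm0 : 0 < m := lt_of_lt_of_le (by positivity) hm
  set A := (1 - lam) ^ (-s - 1 : ℝ) with hA
  have hA0 : 0 < A := Real.rpow_pos_of_pos hε0 _
  have hA2 : 2 ≤ A := by
    have h1 : (1 - lam) ^ (-1 : ℝ) ≤ (1 - lam) ^ (-s - 1 : ℝ) :=
      Real.rpow_le_rpow_of_exponent_ge hε0 (by linarith) (by linarith)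
    have h2 : (1 - lam) ^ (-1 : ℝ) = (1 - lam)⁻¹ := Real.rpow_neg_one _
    have h3 : (2:ℝ) ≤ (1 - lam)⁻¹ := by
      rw [show (1 - lam)⁻¹ = 1 / (1 - lam) from (one_div _).symm, le_div_iff₀ hε0]
      linarith
    rw [h2] at h1; linarith
  have hpos : 0 < m / 2 * s * (A - 1) - 6 / (1 - s) := by
    have key : 48 * (1 - lam) ^ (1 + s : ℝ) ≤ m * ((1 - s) * s) := by
      have h0 : 0 < (1 - s) * s := by positivity
      calc 48 * (1 - lam) ^ (1 + s : ℝ)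
          = 48 / ((1-s)*s) * (1 - lam) ^ (1+s : ℝ) * ((1-s)*s) := by field_simp
        _ ≤ m * ((1-s)*s) := mul_le_mul_of_nonneg_right hm h0.le
    have hBA : (1 - lam) ^ (1 + s : ℝ) * A = 1 := by
      rw [hA, ← Real.rpow_add hε0, show 1 + s + (-s - 1) = 0 by ring, Real.rpow_zero]
    have key2 : 48 ≤ m * ((1 - s) * s) * A := by
      calc (48:ℝ) = 48 * ((1 - lam) ^ (1+s:ℝ) * A) := by rw [hBA]; ring
        _ = 48 * (1-lam) ^ (1+s:ℝ) * A := by ring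
        _ ≤ m * ((1-s)*s) * A := mul_le_mul_of_nonneg_right key hA0.le
    rw [sub_pos, div_lt_iff₀ hc]
    nlinarith [mul_nonneg (mul_nonneg hm0.le (mul_nonneg hc.le hs0.le))
      (by linarith : (0:ℝ) ≤ A - 2), key2]
  refine ⟨?_, hpos⟩
  set d1 := (x' - x) / 2 with hd1def
  have hd1 : 0 < d1 := by rw [hd1def]; linarith
  set δ := min d1 (x - lam) with hδdef
  have hδ : 0 < δ := lt_min hd1 (by linarith)
  set dm := min d1 1 with hdmdef
  have hdm0 : 0 < dm := lt_min hd1 one_pos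
  -- a.e. support
  have hae : ∀ᵐ t ∂ρ, t ∈ Set.Icc (-1:ℝ) (-lam) ∪ Set.Icc x' 1 := by
    have h1 : ∀ᵐ t ∂ρ, t ∈ Set.Icc (-1:ℝ) (-lam) ∪ Set.Icc lam 1 :=
      (MeasureTheory.mem_ae_iff).2 hsupp
    have h2 : ∀ᵐ t ∂ρ, t ∉ Set.Ico lam x' := by
      rw [MeasureTheory.ae_iff]; simp only [not_not, Set.setOf_mem_eq]; exact hgap
    filter_upwards [h1, h2] with t ht1 ht2
    rcases ht1 with h | h
    · exact Or.inl h
    · right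
      refine ⟨?_, h.2⟩
      by_contra hcon
      exact ht2 ⟨h.1, lt_of_not_ge hcon⟩
  -- separation
  have hsep : ∀ t ∈ Set.Icc (-1:ℝ) (-lam) ∪ Set.Icc x' 1, ∀ z ∈ Metric.ball x δ,
      (t ∈ Set.Icc (-1:ℝ) (-lam) → 1 ≤ z - t) ∧ (t ∈ Set.Icc x' 1 → d1 ≤ t - z) := by
    intro t _ z hz
    rw [Metric.mem_ball, Real.dist_eq] at hz
    obtain ⟨hz1, hz2⟩ := abs_lt.1 hz
    constructor
    · intro h
      have h1 : t ≤ -lam := h.2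
      have h2 : δ ≤ x - lam := min_le_right _ _
      linarith
    · intro h
      have h1 : x' ≤ t := h.1
      have h2 : δ ≤ d1 := min_le_left _ _
      have : d1 = (x' - x) / 2 := hd1def
      linarith
  set F' : ℝ → ℝ → ℝ := fun z t =>
    if z < t then s * (t - z) ^ (-s - 1 : ℝ) else -(s * (z - t) ^ (-s - 1 : ℝ)) with hF'
  have hmeasF : ∀ z : ℝ, AEStronglyMeasurable (fun t => |z - t| ^ (-s : ℝ)) ρ := fun z =>
    (by fun_prop : Measurable fun t : ℝ => |z - t| ^ (-s:ℝ)).aestronglyMeasurable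
  have hmeasF' : AEStronglyMeasurable (F' x) ρ := by
    apply Measurable.aestronglyMeasurable
    exact Measurable.ite (measurableSet_lt measurable_const measurable_id)
      (by fun_prop) (by fun_prop)
  have hintF : Integrable (fun t => |x - t| ^ (-s:ℝ)) ρ := by
    apply Integrable.mono' (integrable_const (dm ^ (-s:ℝ))) (hmeasF x)
    filter_upwards [hae] with t ht
    have hsx := hsep t ht x (Metric.mem_ball_self hδ)
    have habs : dm ≤ |x - t| := by
      rcases ht with h | h
      · have h1 := hsx.1 h
        rw [abs_of_pos (by linarith)]
        have := min_le_right d1 1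
        linarith
      · have h1 := hsx.2 h
        rw [abs_of_neg (by linarith)]
        have := min_le_left d1 1
        linarith
    rw [Real.norm_eq_abs, abs_of_nonneg (Real.rpow_nonneg (abs_nonneg _) _)]
    exact Real.rpow_le_rpow_of_nonpos hdm0 habs (by linarith)
  have hbound : ∀ᵐ t ∂ρ, ∀ z ∈ Metric.ball x δ, ‖F' z t‖ ≤ s * dm ^ (-s - 1 : ℝ) := by
    filter_upwards [hae] with t ht z hz
    have hsz := hsep t ht z hz
    rcases ht with h | h
    · have h1 := hsz.1 h
      rw [hF']
      simp only
      rw [if_neg (not_lt.2 (by linarith)), norm_neg, Real.norm_eq_abs,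
        abs_of_nonneg (mul_nonneg hs0.le (Real.rpow_nonneg (by linarith) _))]
      refine mul_le_mul_of_nonneg_left ?_ hs0.le
      refine Real.rpow_le_rpow_of_nonpos hdm0 ?_ (by linarith)
      have := min_le_right d1 1
      linarith
    · have h1 := hsz.2 h
      rw [hF']
      simp only
      rw [if_pos (by linarith), Real.norm_eq_abs,
        abs_of_nonneg (mul_nonneg hs0.le (Real.rpow_nonneg (by linarith) _))]
      refine mul_le_mul_of_nonneg_left ?_ hs0.le
      refine Real.rpow_le_rpow_of_nonpos hdm0 ?_ (by linarith)
      have := min_le_left d1 1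
      linarith
  have hdiff : ∀ᵐ t ∂ρ, ∀ z ∈ Metric.ball x δ,
      HasDerivAt (fun w => |w - t| ^ (-s:ℝ)) (F' z t) z := by
    filter_upwards [hae] with t ht z hz
    have hsz := hsep t ht z hz
    have hne : z ≠ t := by
      rcases ht with h | h
      · exact ne_of_gt (by linarith [hsz.1 h])
      · exact ne_of_lt (by linarith [hsz.2 h])
    exact stmt16_aux s t z hne
  obtain ⟨hintF', hder⟩ :=
    hasDerivAt_integral_of_dominated_loc_of_deriv_le (F := fun z t => |z - t| ^ (-s:ℝ))
      (F' := F') (bound := fun _ => s * dm ^ (-s - 1 : ℝ)) (Metric.ball_mem_nhds x hδ)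
      (Filter.Eventually.of_forall hmeasF) hintF hmeasF' hbound (integrable_const _) hdiff
  have hq : HasDerivAt (fun z : ℝ => 3 * z ^ 2 / (1 - s)) (6 * x / (1 - s)) x := by
    have h1 := ((hasDerivAt_pow 2 x).const_mul 3).div_const (1 - s)
    exact h1.congr_deriv (by norm_num; ring)
  have hder2 : HasDerivAt (fun z : ℝ => (∫ t, |z - t| ^ (-s:ℝ) ∂ρ) - 3 * z ^ 2 / (1 - s))
      ((∫ t, F' x t ∂ρ) - 6 * x / (1 - s)) x := hder.sub hq
  rw [hder2.deriv]
  -- mass of Icc x' 1 and Ici x'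
  have hIcc : ρ (Set.Icc x' 1) = ENNReal.ofReal (m / 2) := by
    have hsub : Set.Icc lam 1 ⊆ Set.Ico lam x' ∪ Set.Icc x' 1 := by
      intro t ht
      rcases lt_or_ge t x' with h | h
      · exact Or.inl ⟨ht.1, h⟩
      · exact Or.inr ⟨h, ht.2⟩
    have h1 : ρ (Set.Icc lam 1) ≤ ρ (Set.Icc x' 1) := by
      calc ρ (Set.Icc lam 1) ≤ ρ (Set.Ico lam x' ∪ Set.Icc x' 1) := measure_mono hsub
        _ ≤ ρ (Set.Ico lam x') + ρ (Set.Icc x' 1) := measure_union_le _ _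
        _ = ρ (Set.Icc x' 1) := by rw [hgap, zero_add]
    have h2 : ρ (Set.Icc x' 1) ≤ ρ (Set.Icc lam 1) :=
      measure_mono (Set.Icc_subset_Icc (le_of_lt (lt_trans hx hxx')) le_rfl)
    rw [← hhalf]
    exact le_antisymm h2 h1
  have hIci : ρ (Set.Ici x') = ENNReal.ofReal (m / 2) := by
    rw [← hIcc]
    refine le_antisymm ?_ (measure_mono Set.Icc_subset_Ici_self)
    have hsub : Set.Ici x' ⊆ Set.Icc x' 1 ∪ (Set.Icc (-1:ℝ) (-lam) ∪ Set.Icc lam 1)ᶜ := by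
      intro t ht
      by_cases h : t ≤ 1
      · exact Or.inl ⟨ht, h⟩
      · right
        rintro (⟨h1, h2⟩ | ⟨h1, h2⟩)
        · have : x' ≤ t := ht
          linarith
        · exact h h2
    calc ρ (Set.Ici x') ≤ ρ (Set.Icc x' 1) + ρ (Set.Icc (-1:ℝ) (-lam) ∪ Set.Icc lam 1)ᶜ :=
          le_trans (measure_mono hsub) (measure_union_le _ _)
      _ = ρ (Set.Icc x' 1) := by rw [hsupp, add_zero]
  -- lower bound on the integral
  set g : ℝ → ℝ := fun t => Set.indicator (Set.Ici x') (fun _ => s * A + s) t + (-s) with hg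
  have hgle : ∀ᵐ t ∂ρ, g t ≤ F' x t := by
    filter_upwards [hae] with t ht
    have hsx := hsep t ht x (Metric.mem_ball_self hδ)
    rcases ht with h | h
    · have h1 := hsx.1 h
      rw [hg, hF']
      simp only
      rw [Set.indicator_of_notMem (by simp only [Set.mem_Ici, not_le]; linarith),
        if_neg (not_lt.2 (by linarith))]
      have h2 : (x - t) ^ (-s - 1:ℝ) ≤ 1 :=
        Real.rpow_le_one_of_one_le_of_nonpos (by linarith) (by linarith)
      nlinarith [mul_le_mul_of_nonneg_left h2 hs0.le]
    · have h1 := hsx.2 h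
      rw [hg, hF']
      simp only
      rw [Set.indicator_of_mem (Set.mem_Ici.2 h.1), if_pos (by linarith)]
      have ht2 : t - x ≤ 1 - lam := by
        have := h.2
        linarith
      have ht3 : 0 < t - x := by linarith
      have h2 : A ≤ (t - x) ^ (-s - 1:ℝ) :=
        Real.rpow_le_rpow_of_nonpos ht3 ht2 (by linarith)
      nlinarith [mul_le_mul_of_nonneg_left h2 hs0.le]
  have hgint : Integrable g ρ :=
    ((integrable_const (s * A + s)).indicator measurableSet_Ici).add (integrable_const _)
  have hintg : ∫ t, g t ∂ρ = (s * A + s) * (m / 2) + (-s) * m := by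
    rw [hg, integral_add ((integrable_const (s * A + s)).indicator measurableSet_Ici)
      (integrable_const _),
      integral_indicator_const (s * A + s) measurableSet_Ici, integral_const, measureReal_def, measureReal_def, hIci, hmass,
      ENNReal.toReal_ofReal (by linarith : (0:ℝ) ≤ m / 2), ENNReal.toReal_ofReal hm0.le]
    simp [smul_eq_mul]
    ring
  have hI : m / 2 * s * (A - 1) ≤ ∫ t, F' x t ∂ρ := by
    have h1 := integral_mono_ae hgint hintF' hgle
    rw [hintg] at h1
    have heq : (s * A + s) * (m / 2) + -s * m = m / 2 * s * (A - 1) := by ring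
    linarith
  have hxle : x ≤ 1 := le_of_lt (lt_of_lt_of_le hxx' hx'1)
  have h6 : 6 * x / (1 - s) ≤ 6 / (1 - s) := (div_le_div_iff_of_pos_right hc).2 (by linarith)
  linarith
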